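/- For every a, b ∈ ℝ with |a| ≤ M, |b| ≤ M (M > 0) and 1 < p ≤ 2, one has |a|^p + |b|^p − 2|(a+b)/2|^p ≥ (1/4) p(p−1) M^{p−2} (b−a)^2. -/

import Mathlib

open Real Set Filter Topology

/-- Key monotonicity on `[0, M]`: the derivative `x ↦ p x^{p-1} - K x` of
`x ↦ x^p - K x²/2` is monotone when `K = p (p-1) M^{p-2}`. -/
private lemma key_mono (p M : ℝ) (hp1 : 1 < p) (hp2 : p ≤ 2) (hM : 0 < M)
    {x y : ℝ} (hx : 0 ≤ x) (hxy : x ≤ y) (hyM : y ≤ M) :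
    p * |x| ^ (p - 2) * x - p * (p - 1) * M ^ (p - 2) * x
      ≤ p * |y| ^ (p - 2) * y - p * (p - 1) * M ^ (p - 2) * y := by
  rcases eq_or_lt_of_le hxy with rfl | hlt
  · exact le_rfl
  have hy : 0 ≤ y := hx.trans hxy
  have hpow : ∀ t : ℝ, 0 ≤ t → |t| ^ (p - 2) * t = t ^ (p - 1) := by
    intro t ht
    rcases eq_or_lt_of_le ht with rfl | ht'
    · simp [Real.zero_rpow (show p - 1 ≠ 0 by linarith)]
    · rw [abs_of_pos ht', show p - 1 = (p - 2) + 1 by ring,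
        Real.rpow_add_one (ne_of_gt ht')]
  have ex : p * |x| ^ (p - 2) * x = p * x ^ (p - 1) := by rw [mul_assoc, hpow x hx]
  have ey : p * |y| ^ (p - 2) * y = p * y ^ (p - 1) := by rw [mul_assoc, hpow y hy]
  rw [ex, ey]
  -- mean value theorem for t ↦ t^(p-1) on [x,y]
  have hcont : ContinuousOn (fun t : ℝ => t ^ (p - 1)) (Icc x y) := fun t ht =>
    (Real.continuousAt_rpow_const t (p - 1)
      (Or.inr (by linarith))).continuousWithinAt
  have hder : ∀ t ∈ Ioo x y,
      HasDerivAt (fun t : ℝ => t ^ (p - 1)) ((p - 1) * t ^ (p - 2)) t := by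
    intro t ht
    have ht0 : t ≠ 0 := ne_of_gt (lt_of_le_of_lt hx ht.1)
    have := Real.hasDerivAt_rpow_const (x := t) (p := p - 1) (Or.inl ht0)
    simpa [show p - 1 - 1 = p - 2 by ring] using this
  obtain ⟨c, hc, hceq⟩ := exists_hasDerivAt_eq_slope (fun t : ℝ => t ^ (p - 1))
    (fun t => (p - 1) * t ^ (p - 2)) hlt hcont hder
  have hc0 : 0 < c := lt_of_le_of_lt hx hc.1
  have hcM : c ≤ M := le_of_lt (lt_of_lt_of_le hc.2 hyM)
  have hMc : M ^ (p - 2) ≤ c ^ (p - 2) :=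
    Real.rpow_le_rpow_of_nonpos hc0 hcM (by linarith)
  have hyx : 0 < y - x := sub_pos.mpr hlt
  have hfact : y ^ (p - 1) - x ^ (p - 1) = (p - 1) * c ^ (p - 2) * (y - x) := by
    field_simp at hceq
    linarith [hceq]
  have hp0 : 0 < p := by linarith
  nlinarith [mul_le_mul_of_nonneg_right hMc (le_of_lt hyx),
    mul_pos hp0 (show (0:ℝ) < p - 1 by linarith)]

theorem stmt_4 (p M a b : ℝ) (hp1 : 1 < p) (hp2 : p ≤ 2) (hM : 0 < M)
    (ha : |a| ≤ M) (hb : |b| ≤ M) :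
    (1 / 4) * (p * (p - 1)) * M ^ (p - 2) * (b - a) ^ 2
      ≤ |a| ^ p + |b| ^ p - 2 * |(a + b) / 2| ^ p := by
  obtain ⟨K, hK⟩ : ∃ K : ℝ, K = p * (p - 1) * M ^ (p - 2) := ⟨_, rfl⟩
  have hKpos : 0 < K := by
    rw [hK]
    exact mul_pos (mul_pos (by linarith) (by linarith)) (Real.rpow_pos_of_pos hM _)
  set g : ℝ → ℝ := fun x => |x| ^ p - K / 2 * x ^ 2 with hg
  set D : ℝ → ℝ := fun x => p * |x| ^ (p - 2) * x - K * x with hD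
  have hderiv : ∀ x : ℝ, HasDerivAt g (D x) x := by
    intro x
    have h1 : HasDerivAt (fun x : ℝ => |x| ^ p) (p * |x| ^ (p - 2) * x) x :=
      hasDerivAt_abs_rpow x hp1
    have h2 : HasDerivAt (fun x : ℝ => K / 2 * x ^ 2) (K * x) x := by
      have := (hasDerivAt_pow 2 x).const_mul (K / 2)
      convert this using 1
      exacts [rfl, rfl, by simp; ring]
    exact h1.sub h2
  have hodd : ∀ x : ℝ, D (-x) = -D x := by
    intro x; simp only [hD, abs_neg]; ring
  have hkey : ∀ x y : ℝ, 0 ≤ x → x ≤ y → y ≤ M → D x ≤ D y := by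
    intro x y hx hxy hyM
    simpa only [hD, hK] using key_mono p M hp1 hp2 hM hx hxy hyM
  have hmono : MonotoneOn D (Icc (-M) M) := by
    intro x hx y hy hxy
    rcases le_or_gt 0 x with h0x | h0x
    · exact hkey x y h0x hxy hy.2
    rcases le_or_gt 0 y with h0y | h0y
    · have h1 := hkey 0 (-x) le_rfl (by linarith) (by linarith [hx.1])
      have h2 := hkey 0 y le_rfl h0y hy.2
      have hD0 : D 0 = 0 := by simp [hD]
      linarith [hodd x]
    · have h1 := hkey (-y) (-x) (by linarith) (by linarith) (by linarith [hx.1])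
      linarith [hodd x, hodd y]
  have hconv : ConvexOn ℝ (Icc (-M) M) g := by
    apply MonotoneOn.convexOn_of_deriv (convex_Icc _ _)
    · exact fun x _ => ((hderiv x).differentiableAt).continuousAt.continuousWithinAt
    · exact fun x _ => ((hderiv x).differentiableAt).differentiableWithinAt
    · have : deriv g = D := funext fun x => (hderiv x).deriv
      rw [this]
      exact hmono.mono interior_subset
  have ha' : a ∈ Icc (-M) M := by
    rw [mem_Icc]; constructor <;> [linarith [neg_abs_le a]; linarith [le_abs_self a]]
  have hb' : b ∈ Icc (-M) M := by
    rw [mem_Icc]; constructor <;> [linarith [neg_abs_le b]; linarith [le_abs_self b]]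
  have hmid := hconv.2 ha' hb' (by norm_num : (0:ℝ) ≤ 1/2) (by norm_num : (0:ℝ) ≤ 1/2)
    (by norm_num)
  simp only [smul_eq_mul] at hmid
  rw [show (1:ℝ)/2 * a + 1/2 * b = (a + b) / 2 by ring] at hmid
  simp only [hg] at hmid
  have hgoal : (1 / 4) * (p * (p - 1)) * M ^ (p - 2) * (b - a) ^ 2
      = K / 4 * (b - a) ^ 2 := by rw [hK]; ring
  rw [hgoal]
  nlinarith [hmid]
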